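/- Fix r ≥ 2 and n = w(r−1)+1 with w ≥ 1. Among all r-furcating rooted tree shapes with n leaves and uniform leaf weight vector of all ones, the Huffman algorithm produces a unique tree shape: any two trees constructed by the algorithm (making arbitrary choices when multiple minimal-weight r-sets exist) have the same unlabeled topology. -/

import Mathlib

/-- Rooted trees with unlabeled leaves: a tree is a leaf or a list of subtrees. -/
inductive RTree : Type
  | leaf : RTree
  | node : List RTree → RTree

namespace RTree

/-- Number of leaves of a rooted tree. -/
def leaves : RTree → ℕ
  | leaf => 1
  | node ts => (ts.attach.map (fun ⟨t, _⟩ => leaves t)).sum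
decreasing_by
  have := List.sizeOf_lt_of_mem ‹_›
  simp only [RTree.node.sizeOf_spec]
  omega

/-- Multiset of values `m(v)` (number of descendant leaves) over internal nodes `v`. -/
def weights : RTree → Multiset ℕ
  | leaf => 0
  | node ts => leaves (node ts) ::ₘ (ts.attach.map (fun ⟨t, _⟩ => weights t)).sum
decreasing_by
  have := List.sizeOf_lt_of_mem ‹_›
  simp only [RTree.node.sizeOf_spec]
  omega

/-- A tree is (strictly) r-furcating if every internal node has exactly r children. -/
inductive IsRFurcating (r : ℕ) : RTree → Prop
  | leaf : IsRFurcating r .leaf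
  | node (ts : List RTree) (hlen : ts.length = r)
      (hts : ∀ t ∈ ts, IsRFurcating r t) : IsRFurcating r (.node ts)

/-- The number of labeled histories of (any labeling of) an r-furcating tree,
via the recursion `N(T) = multinomial(w−1; w₁,…,w_r) ∏ N(Tᵢ)` where
`wᵢ = (|Tᵢ|−1)/(r−1)` and `w − 1 = ∑ wᵢ`. -/
def NLH (r : ℕ) : RTree → ℕ
  | leaf => 1
  | node ts =>
      (Nat.factorial ((ts.map (fun t => (leaves t - 1) / (r - 1))).sum) /
        (ts.map (fun t => Nat.factorial ((leaves t - 1) / (r - 1)))).prod) *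
      (ts.attach.map (fun ⟨t, _⟩ => NLH r t)).prod
decreasing_by
  have := List.sizeOf_lt_of_mem ‹_›
  simp only [RTree.node.sizeOf_spec]
  omega

/-- Shape equality of rooted trees: same unlabeled topology, i.e., children
lists agree up to permutation and recursive shape equality. -/
inductive SameShape : RTree → RTree → Prop
  | leaf : SameShape .leaf .leaf
  | node {l₁ l₂ l₃ : List RTree} :
      List.Forall₂ SameShape l₁ l₂ → l₂.Perm l₃ → SameShape (.node l₁) (.node l₃)

end RTree

namespace RTree

/-- One step of the r-ary Huffman algorithm on a multiset of already-built
trees: merge `r` trees of minimal weight into a new node (with all-ones initial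
leaf weights, the weight of a tree is its number of leaves). -/
inductive HuffStep (r : ℕ) : Multiset RTree → Multiset RTree → Prop
  | step (l : List RTree) (rest : Multiset RTree) (hlen : l.length = r)
      (hmin : ∀ a ∈ l, ∀ b ∈ rest, leaves a ≤ leaves b) :
      HuffStep r ((l : Multiset RTree) + rest) (RTree.node l ::ₘ rest)

/-- `T` is an H-tree on `n` leaves for the uniform all-ones weight vector:
it can be produced by repeatedly merging `r` minimal-weight nodes starting
from `n` leaves. -/
def IsHTree (r n : ℕ) (T : RTree) : Prop :=
  Relation.ReflTransGen (HuffStep r) (Multiset.replicate n RTree.leaf) {T}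

/-- The fully symmetric r-furcating tree on `r^k` leaves. -/
def fullSym (r : ℕ) : ℕ → RTree
  | 0 => .leaf
  | k + 1 => .node (List.replicate r (fullSym r k))

end RTree

namespace HuffAux
open RTree

noncomputable instance : DecidableEq RTree := Classical.decEq _

lemma leaves_node (ts : List RTree) : leaves (.node ts) = (ts.map leaves).sum := by
  rw [leaves]; congr 1; exact List.attach_map_val (l := ts) (f := leaves)

/-- Weight multiset of a pool. -/
def wts (M : Multiset RTree) : Multiset ℕ := M.map leaves

lemma wts_coe (l : List RTree) : wts (l : Multiset RTree) = ((l.map leaves : List ℕ) : Multiset ℕ) := by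
  simp [wts]

/-- Deterministic weight-level Huffman step. -/
def hf (r : ℕ) (W : Multiset ℕ) : Multiset ℕ :=
  ((W.sort (·≤·)).take r).sum ::ₘ (((W.sort (·≤·)).drop r : List ℕ) : Multiset ℕ)

lemma sort_split (A B : Multiset ℕ) (h : ∀ a ∈ A, ∀ b ∈ B, a ≤ b) :
    (A + B).sort (·≤·) = A.sort (·≤·) ++ B.sort (·≤·) := by
  apply (fun h1 h2 h3 => List.Perm.eq_of_pairwise' (r := (· ≤ · : ℕ → ℕ → Prop)) h2 h3 h1)
  · rw [← Multiset.coe_eq_coe, ← Multiset.coe_add, Multiset.sort_eq, Multiset.sort_eq,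
      Multiset.sort_eq]
  · exact Multiset.pairwise_sort _ _
  · rw [List.pairwise_append]
    refine ⟨Multiset.pairwise_sort _ _, Multiset.pairwise_sort _ _, ?_⟩
    intro a ha b hb
    exact h a ((Multiset.mem_sort _).1 ha) b ((Multiset.mem_sort _).1 hb)

lemma huffstep_wts {r : ℕ} {M N : Multiset RTree} (h : HuffStep r M N) :
    wts N = hf r (wts M) := by
  obtain ⟨l, rest, hlen, hmin⟩ := h
  have hA : wts ((l : Multiset RTree) + rest) = ((l.map leaves : List ℕ) : Multiset ℕ) + wts rest := by
    simp [wts]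
  have hcross : ∀ a ∈ ((l.map leaves : List ℕ) : Multiset ℕ), ∀ b ∈ wts rest, a ≤ b := by
    intro a ha b hb
    rw [Multiset.mem_coe, List.mem_map] at ha
    obtain ⟨t, ht, rfl⟩ := ha
    obtain ⟨u, hu, rfl⟩ := Multiset.mem_map.1 hb
    exact hmin t ht u hu
  have hsplit := sort_split _ _ hcross
  have hlenA : (((l.map leaves : List ℕ) : Multiset ℕ).sort (· ≤ ·)).length = r := by
    rw [Multiset.length_sort]; simp [hlen]
  have hsum : (((l.map leaves : List ℕ) : Multiset ℕ).sort (· ≤ ·)).sum = (l.map leaves).sum := by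
    rw [← Multiset.sum_coe, Multiset.sort_eq, Multiset.sum_coe]
  have hdrop : ((((wts rest).sort (· ≤ ·)) : List ℕ) : Multiset ℕ) = wts rest := Multiset.sort_eq _ _
  unfold hf
  rw [hA, hsplit, ← hlenA, List.take_left, List.drop_left, hsum, hdrop]
  simp [wts, leaves_node]

lemma huffstep_card {r : ℕ} {M N : Multiset RTree} (h : HuffStep r M N) :
    Multiset.card M + 1 = Multiset.card N + r := by
  obtain ⟨l, rest, hlen, hmin⟩ := h
  simp [hlen]; omega

lemma huffstep_sum {r : ℕ} {M N : Multiset RTree} (h : HuffStep r M N) :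
    (wts N).sum = (wts M).sum := by
  obtain ⟨l, rest, hlen, hmin⟩ := h
  simp [wts, leaves_node]

lemma huffstep_pos {r : ℕ} (hr : 1 ≤ r) {M N : Multiset RTree} (h : HuffStep r M N)
    (hM : ∀ t ∈ M, 0 < leaves t) : ∀ t ∈ N, 0 < leaves t := by
  obtain ⟨l, rest, hlen, hmin⟩ := h
  intro t ht
  rcases Multiset.mem_cons.1 ht with rfl | ht
  · rw [leaves_node]
    have hne : l ≠ [] := by intro h0; rw [h0] at hlen; simp at hlen; omega
    obtain ⟨a, ha⟩ := List.exists_mem_of_ne_nil l hne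
    have h1 : 0 < leaves a := hM a (by simp [Multiset.mem_coe, ha])
    have h2 : leaves a ≤ (l.map leaves).sum :=
      List.single_le_sum (by intro x hx; omega) _ (List.mem_map.2 ⟨a, ha, rfl⟩)
    omega
  · exact hM t (by simp [Multiset.mem_add, ht])

lemma reach_pos {r n : ℕ} (hr : 1 ≤ r) {M : Multiset RTree}
    (h : Relation.ReflTransGen (HuffStep r) (Multiset.replicate n .leaf) M) :
    ∀ t ∈ M, 0 < leaves t := by
  induction h with
  | refl =>
    intro t ht
    rw [Multiset.eq_of_mem_replicate ht]
    simp [leaves]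
  | tail _ hstep ih => exact huffstep_pos hr hstep ih

lemma reach_sum {r n : ℕ} {M : Multiset RTree}
    (h : Relation.ReflTransGen (HuffStep r) (Multiset.replicate n .leaf) M) :
    (wts M).sum = n := by
  induction h with
  | refl => simp [wts, Multiset.map_replicate, leaves]
  | tail _ hstep ih => rw [huffstep_sum hstep, ih]

lemma reach_wts {r n : ℕ} (hr : 1 ≤ r) {M : Multiset RTree}
    (h : Relation.ReflTransGen (HuffStep r) (Multiset.replicate n .leaf) M) :
    ∃ k, n = Multiset.card M + k * (r - 1) ∧ wts M = (hf r)^[k] (Multiset.replicate n 1) := by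
  induction h with
  | refl =>
    exact ⟨0, by simp, by simp [wts, Multiset.map_replicate, leaves]⟩
  | tail _ hstep ih =>
    obtain ⟨k, hk, hw⟩ := ih
    have hc := huffstep_card hstep
    refine ⟨k + 1, ?_, ?_⟩
    · have : (k + 1) * (r - 1) = k * (r - 1) + (r - 1) := by ring
      omega
    · rw [Function.iterate_succ_apply', ← hw, huffstep_wts hstep]

lemma reach_restrict {r n : ℕ} {M : Multiset RTree}
    (h : Relation.ReflTransGen (HuffStep r) (Multiset.replicate n .leaf) M) :
    ∀ S ≤ M, Relation.ReflTransGen (HuffStep r) (Multiset.replicate ((wts S).sum) .leaf) S := by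
  induction h with
  | refl =>
    intro S hS
    have hmem : ∀ b ∈ S, b = RTree.leaf := fun b hb =>
      Multiset.eq_of_mem_replicate (Multiset.mem_of_le hS hb)
    have hrep : S = Multiset.replicate (Multiset.card S) .leaf := Multiset.eq_replicate_of_mem hmem
    have hsum : (wts S).sum = Multiset.card S := by
      rw [hrep]; simp [wts, Multiset.map_replicate, leaves]
    rw [hsum, ← hrep]
  | tail _ hstep ih =>
    obtain ⟨l, rest, hlen, hmin⟩ := hstep
    intro S hS
    by_cases hmem : RTree.node l ∈ S
    · have hS' : S.erase (.node l) ≤ rest := by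
        have := Multiset.erase_le_erase (RTree.node l) hS
        rwa [Multiset.erase_cons_head] at this
      have hS0 : ((l : Multiset RTree) + S.erase (.node l)) ≤ (l : Multiset RTree) + rest :=
        add_le_add_right hS' _
      have hreach := ih _ hS0
      have hstep' : HuffStep r ((l : Multiset RTree) + S.erase (.node l))
          (.node l ::ₘ S.erase (.node l)) :=
        HuffStep.step l _ hlen (fun a ha b hb => hmin a ha b (Multiset.mem_of_le hS' hb))
      have hSeq : S = .node l ::ₘ S.erase (.node l) := (Multiset.cons_erase hmem).symm
      have hsum : (wts ((l : Multiset RTree) + S.erase (.node l))).sum = (wts S).sum := by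
        rw [hSeq]; simp [wts, leaves_node]
      have final := hreach.tail hstep'
      rwa [hsum, ← hSeq] at final
    · have hS'' : S ≤ rest := by
        rw [Multiset.le_iff_count] at hS ⊢
        intro a
        by_cases ha : a = RTree.node l
        · subst ha
          simp [Multiset.count_eq_zero_of_notMem hmem]
        · have := hS a
          rwa [Multiset.count_cons_of_ne ha] at this
      exact ih _ (le_trans hS'' (Multiset.le_add_left _ _))

lemma huffstep_singleton {r : ℕ} {M N : Multiset RTree} (h : HuffStep r M N) {S : RTree}
    (hN : N = {S}) : ∃ l : List RTree, l.length = r ∧ M = (l : Multiset RTree) ∧ S = .node l := by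
  obtain ⟨l, rest, hlen, hmin⟩ := h
  have hcard : Multiset.card (RTree.node l ::ₘ rest) = 1 := by rw [hN]; simp
  simp only [Multiset.card_cons] at hcard
  have hrest : rest = 0 := by
    refine Multiset.card_eq_zero.1 ?_
    omega
  subst hrest
  refine ⟨l, hlen, by simp, ?_⟩
  rw [show ((RTree.node l ::ₘ 0 : Multiset RTree)) = {RTree.node l} from rfl] at hN
  exact (Multiset.singleton_inj.1 hN.symm)

lemma matching : ∀ (l l' : List RTree), (l.map leaves).Perm (l'.map leaves) →
    (∀ a ∈ l, ∀ b ∈ l', leaves a = leaves b → SameShape a b) →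
    ∃ l₂, List.Forall₂ SameShape l l₂ ∧ l₂.Perm l'
  | [], l', hp, _ => by
    have : l'.map leaves = [] := hp.symm.eq_nil
    have : l' = [] := by simpa using this
    exact ⟨[], List.Forall₂.nil, by simp [this]⟩
  | a :: ls, l', hp, hs => by
    have ha : leaves a ∈ l'.map leaves := hp.subset (by simp)
    obtain ⟨b, hb, hab⟩ := List.mem_map.1 ha
    have hshape : SameShape a b := hs a (by simp) b hb hab.symm
    have hperm' : (ls.map leaves).Perm ((l'.erase b).map leaves) := by
      have h1 : l'.Perm (b :: l'.erase b) := List.perm_cons_erase hb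
      have h2 : (l'.map leaves).Perm (leaves b :: (l'.erase b).map leaves) := by
        simpa using h1.map leaves
      have h3 : (leaves a :: ls.map leaves).Perm (leaves b :: (l'.erase b).map leaves) := by
        simpa using hp.trans h2
      rw [hab] at h3
      exact h3.cons_inv
    obtain ⟨l₂', h₂f, h₂p⟩ := matching ls (l'.erase b) hperm'
      (fun x hx y hy => hs x (List.mem_cons_of_mem _ hx) y (List.mem_of_mem_erase hy))
    exact ⟨b :: l₂', List.Forall₂.cons hshape h₂f, ((h₂p.cons b)).trans (List.perm_cons_erase hb).symm⟩

lemma htree_unique {r : ℕ} (hr : 2 ≤ r) :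
    ∀ m : ℕ, ∀ S T : RTree, IsHTree r m S → IsHTree r m T → SameShape S T := by
  intro m
  induction m using Nat.strong_induction_on with
  | _ m ih =>
  intro S T hS hT
  have hr1 : 1 ≤ r := by omega
  -- analyze last step of a run
  have key : ∀ U : RTree, IsHTree r m U →
      (m = 1 ∧ U = .leaf) ∨
      ∃ l : List RTree, l.length = r ∧ U = .node l ∧ 2 ≤ m ∧
        Relation.ReflTransGen (HuffStep r) (Multiset.replicate m .leaf) (l : Multiset RTree) := by
    intro U hU
    rcases Relation.ReflTransGen.cases_tail hU with h1 | ⟨MU, hMU, hstepU⟩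
    · left
      have hm : m = 1 := by
        have := congrArg Multiset.card h1
        simpa using this.symm
      subst hm
      rw [Multiset.replicate_one] at h1
      exact ⟨rfl, Multiset.singleton_inj.1 h1⟩
    · right
      obtain ⟨l, hlen, hMeq, hUeq⟩ := huffstep_singleton hstepU rfl
      subst hMeq
      refine ⟨l, hlen, hUeq, ?_, hMU⟩
      obtain ⟨k, hk, -⟩ := reach_wts hr1 hMU
      rw [Multiset.coe_card, hlen] at hk
      omega
  rcases key S hS with ⟨hm, rfl⟩ | ⟨l, hlen, rfl, hm2, hMS⟩
  · rcases key T hT with ⟨-, rfl⟩ | ⟨l', hlen', rfl, hm2', -⟩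
    · exact SameShape.leaf
    · omega
  · rcases key T hT with ⟨hm1, rfl⟩ | ⟨l', hlen', rfl, -, hMT⟩
    · omega
    · -- weight multisets of the two penultimate pools agree
      obtain ⟨k, hk, hw⟩ := reach_wts hr1 hMS
      obtain ⟨k', hk', hw'⟩ := reach_wts hr1 hMT
      rw [Multiset.coe_card, hlen] at hk
      rw [Multiset.coe_card, hlen'] at hk'
      have hkk : k = k' := by
        have h1 : k * (r - 1) = k' * (r - 1) := by omega
        exact Nat.eq_of_mul_eq_mul_right (by omega) h1
      have hwts : wts (l : Multiset RTree) = wts (l' : Multiset RTree) := by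
        rw [hw, hw', hkk]
      rw [wts_coe, wts_coe] at hwts
      have hperm : (l.map leaves).Perm (l'.map leaves) := Multiset.coe_eq_coe.1 hwts
      -- every member of l (and l') is an H-tree on its own leaf count
      have hsub : ∀ (lst : List RTree),
          Relation.ReflTransGen (HuffStep r) (Multiset.replicate m .leaf) (lst : Multiset RTree) →
          ∀ a ∈ lst, IsHTree r (leaves a) a := by
        intro lst hreach a ha
        have h1 : ({a} : Multiset RTree) ≤ (lst : Multiset RTree) :=
          Multiset.singleton_le.2 (Multiset.mem_coe.2 ha)
        have := reach_restrict hreach _ h1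
        simpa [wts, IsHTree] using this
      -- every member of l has fewer than m leaves
      have hlt : ∀ (lst : List RTree), lst.length = r →
          Relation.ReflTransGen (HuffStep r) (Multiset.replicate m .leaf) (lst : Multiset RTree) →
          ∀ a ∈ lst, leaves a < m := by
        intro lst hlenl hreach a ha
        have hsuml : (lst.map leaves).sum = m := by
          have := reach_sum hreach
          rwa [wts_coe, Multiset.sum_coe] at this
        have hpos : ∀ t ∈ lst, 0 < leaves t := by
          intro t ht
          exact reach_pos hr1 hreach t (Multiset.mem_coe.2 ht)
        have hpm : lst.Perm (a :: lst.erase a) := List.perm_cons_erase ha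
        have hsum2 : (lst.map leaves).sum = leaves a + ((lst.erase a).map leaves).sum := by
          have := (hpm.map leaves).sum_eq
          simpa using this
        have hne : lst.erase a ≠ [] := by
          intro h0
          have : (lst.erase a).length = r - 1 := by rw [List.length_erase_of_mem ha, hlenl]
          rw [h0] at this
          simp at this
          omega
        obtain ⟨b, hb⟩ := List.exists_mem_of_ne_nil _ hne
        have hb1 : 0 < leaves b := hpos b (List.mem_of_mem_erase hb)
        have hb2 : leaves b ≤ ((lst.erase a).map leaves).sum :=
          List.single_le_sum (by intro x hx; omega) _ (List.mem_map.2 ⟨b, hb, rfl⟩)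
        omega
      obtain ⟨l₂, hf₂, hp₂⟩ := matching l l' hperm (by
        intro a ha b hb hab
        exact ih (leaves a) (hlt l hlen hMS a ha) a b (hsub l hMS a ha)
          (by rw [hab]; exact hsub l' hMT b hb))
      exact SameShape.node hf₂ hp₂

end HuffAux

open RTree in
/-- For `n = w(r−1)+1` leaves (`w ≥ 1`) with the uniform all-ones weight
vector, the Huffman algorithm produces a unique tree shape: any two H-trees
have the same unlabeled topology. -/
theorem HTree_shape_unique (r : ℕ) (hr : 2 ≤ r) (w : ℕ) (hw : 1 ≤ w)
    (n : ℕ) (hn : n = w * (r - 1) + 1) (S T : RTree)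
    (hS : IsHTree r n S) (hT : IsHTree r n T) :
    SameShape S T :=
  HuffAux.htree_unique hr n S T hS hT
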